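/- Let p be an odd prime, let n ≥ 1 be an odd natural number with p^a exactly dividing n (a ≥ 0), let l ≥ 2 be a natural number and k an integer. If there exist integers x_1, …, x_l and some j ≥ a+1 such that x_1^n + ⋯ + x_l^n ≡ k (mod p^j), then for every i ≥ 1 there exist integers y_1, …, y_l with y_1^n + ⋯ + y_l^n ≡ k (mod p^i). -/

import Mathlib

open Finset

lemma aux3 (v : ℕ) (hv : 1 ≤ v) : v + 2 ≤ 3 ^ v := by
  induction v with
  | zero => omega
  | succ w ih =>
    rcases Nat.eq_zero_or_pos w with h | h
    · subst h; norm_num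
    · have := ih h
      have : 3 ^ w ≤ 3 ^ (w + 1) := Nat.pow_le_pow_right (by norm_num) (by omega)
      omega

lemma keyNat (p n a d s : ℕ) (hp : p.Prime) (hp3 : 3 ≤ p) (hn : 1 ≤ n)
    (hpa : p ^ a ∣ n) (hd : 1 ≤ d) (hs : 2 ≤ s) :
    p ^ (a + d + 1) ∣ n.choose s * (p ^ d) ^ s := by
  set v := s.factorization p with hv
  have hs0 : s ≠ 0 := by omega
  have hco : p.Coprime (s / p ^ v) := Nat.coprime_ordCompl hp hs0
  have hvs : v + 2 ≤ s := by
    rcases Nat.eq_zero_or_pos v with h0 | h1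
    · omega
    · have h2 : p ^ v ≤ s := Nat.ordProj_le p hs0
      have h3 : 3 ^ v ≤ p ^ v := Nat.pow_le_pow_left hp3 v
      have := aux3 v h1
      omega
  have hid : n.choose s * s = n * (n - 1).choose (s - 1) := by
    have h := Nat.add_one_mul_choose_eq (n - 1) (s - 1)
    have e1 : n - 1 + 1 = n := by omega
    have e2 : s - 1 + 1 = s := by omega
    rw [e1, e2] at h
    omega
  have h1 : p ^ a ∣ n.choose s * s := by
    rw [hid]; exact Dvd.dvd.mul_right hpa _
  have h2 : p ^ a ∣ n.choose s * p ^ v * (s / p ^ v) := by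
    rwa [mul_assoc, Nat.ordProj_mul_ordCompl_eq_self]
  have h3 : p ^ a ∣ n.choose s * p ^ v :=
    (Nat.Coprime.pow_left a hco).dvd_of_dvd_mul_right h2
  obtain ⟨t, ht⟩ := h3
  have hineq : a + d + 1 + v ≤ a + d * s := by
    have e1 : d * (v + 2) ≤ d * s := Nat.mul_le_mul_left _ hvs
    have e2 : v * 1 ≤ v * d := Nat.mul_le_mul_left _ hd
    nlinarith
  have hdvd : p ^ (a + d + 1 + v) ∣ n.choose s * p ^ (d * s) * p ^ v := by
    have e : n.choose s * p ^ (d * s) * p ^ v = p ^ (a + d * s) * t := by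
      calc n.choose s * p ^ (d * s) * p ^ v = (n.choose s * p ^ v) * p ^ (d * s) := by ring
        _ = p ^ a * t * p ^ (d * s) := by rw [ht]
        _ = p ^ (a + d * s) * t := by rw [pow_add]; ring
    rw [e]
    exact dvd_mul_of_dvd_left (pow_dvd_pow p hineq) t
  have hpv : 0 < p ^ v := pow_pos hp.pos v
  have h4 : p ^ (a + d + 1) * p ^ v ∣ n.choose s * p ^ (d * s) * p ^ v := by
    rwa [← pow_add]
  have h5 := (Nat.mul_dvd_mul_iff_right hpv).mp h4
  rwa [pow_mul] at h5

lemma keyInt (p n a d s : ℕ) (hp : p.Prime) (hp3 : 3 ≤ p) (hn : 1 ≤ n)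
    (hpa : p ^ a ∣ n) (hd : 1 ≤ d) (hs : 2 ≤ s) :
    (p : ℤ) ^ (a + d + 1) ∣ (n.choose s : ℤ) * ((p : ℤ) ^ d) ^ s := by
  have := keyNat p n a d s hp hp3 hn hpa hd hs
  have := Int.natCast_dvd_natCast.mpr this
  push_cast at this
  exact this

lemma expandLem (p n a d : ℕ) (hp : p.Prime) (hp3 : 3 ≤ p) (hn : 1 ≤ n)
    (hpa : p ^ a ∣ n) (hd : 1 ≤ d) (x h : ℤ) :
    (p : ℤ) ^ (a + d + 1) ∣
      (x + h * (p : ℤ) ^ d) ^ n - (x ^ n + (n : ℤ) * x ^ (n - 1) * (h * (p : ℤ) ^ d)) := by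
  obtain ⟨m, rfl⟩ : ∃ m, n = m + 1 := ⟨n - 1, by omega⟩
  set y : ℤ := h * (p : ℤ) ^ d with hy
  have key : (x + y) ^ (m + 1) - (x ^ (m + 1) + ((m : ℤ) + 1) * x ^ m * y) =
      ∑ i ∈ Finset.range m, x ^ i * y ^ (m + 1 - i) * ((m + 1).choose i : ℤ) := by
    rw [add_pow, Finset.sum_range_succ, Finset.sum_range_succ]
    have e1 : m + 1 - m = 1 := by omega
    have e2 : (m + 1).choose m = m + 1 := Nat.choose_succ_self_right m
    have e3 : m + 1 - (m + 1) = 0 := by omega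
    rw [e1, e2, e3, Nat.choose_self]
    push_cast
    ring
  have e4 : (m + 1 : ℕ) - 1 = m := by omega
  rw [e4]
  have : ((m : ℤ) + 1) = ((m + 1 : ℕ) : ℤ) := by push_cast; ring
  rw [← this] at *
  rw [key]
  apply Finset.dvd_sum
  intro i hi
  have him : i < m := Finset.mem_range.mp hi
  set s : ℕ := m + 1 - i with hs
  have hs2 : 2 ≤ s := by omega
  have hsym : (m + 1).choose i = (m + 1).choose s := by
    rw [hs]
    exact (Nat.choose_symm (by omega)).symm
  have hkey := keyInt p (m + 1) a d s hp hp3 hn hpa hd hs2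
  have : x ^ i * y ^ s * ((m + 1).choose i : ℤ) =
      ((m + 1).choose s : ℤ) * ((p : ℤ) ^ d) ^ s * (x ^ i * h ^ s) := by
    rw [hsym, hy]
    ring
  rw [this]
  exact dvd_mul_of_dvd_left hkey _

lemma exists_inv (p : ℕ) (hp : p.Prime) (u c : ℤ) (hu : ¬ (p : ℤ) ∣ u) :
    ∃ h : ℤ, u * h ≡ c [ZMOD (p : ℤ)] := by
  haveI := Fact.mk hp
  have hu' : (u : ZMod p) ≠ 0 := by
    rwa [Ne, ZMod.intCast_zmod_eq_zero_iff_dvd]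
  refine ⟨(((c : ZMod p) * (u : ZMod p)⁻¹).val : ℤ), ?_⟩
  have : ((u * (((c : ZMod p) * (u : ZMod p)⁻¹).val : ℤ) : ℤ) : ZMod p) = ((c : ℤ) : ZMod p) := by
    push_cast
    rw [ZMod.natCast_val, ZMod.cast_id]
    field_simp
  exact (ZMod.intCast_eq_intCast_iff _ _ _).mp this

lemma stepLem (p n a l : ℕ) (k : ℤ) (hp : p.Prime) (hp3 : 3 ≤ p) (hn : 1 ≤ n)
    (hpa : p ^ a ∣ n) (hpa2 : ¬ p ^ (a + 1) ∣ n)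
    (j : ℕ) (hj : a + 1 ≤ j) (x : Fin l → ℤ) (i0 : Fin l)
    (hx0 : ¬ (p : ℤ) ∣ x i0)
    (hsum : (∑ t, x t ^ n) ≡ k [ZMOD (p : ℤ) ^ j]) :
    ∃ x' : Fin l → ℤ, (∑ t, x' t ^ n) ≡ k [ZMOD (p : ℤ) ^ (j + 1)] ∧ ¬ (p : ℤ) ∣ x' i0 := by
  set d : ℕ := j - a with hdef
  have hd : 1 ≤ d := by omega
  have hja : j = a + d := by omega
  -- write n = p^a * n'
  obtain ⟨n', hn'⟩ := hpa
  have hpn' : ¬ (p : ℤ) ∣ (n' : ℤ) := by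
    rw [Int.natCast_dvd_natCast]
    intro hdvd
    exact hpa2 (by rw [hn', pow_succ]; exact mul_dvd_mul_left _ hdvd)
  -- c with k - sum = p^j * c
  obtain ⟨c, hc⟩ : ((p:ℤ)^j) ∣ k - ∑ t, x t ^ n := Int.modEq_iff_dvd.mp hsum
  -- choose h
  have hux : ¬ (p : ℤ) ∣ (n' : ℤ) * x i0 ^ (n - 1) := by
    intro hdvd
    rcases (Int.Prime.dvd_mul' hp hdvd) with h1 | h1
    · exact hpn' h1
    · exact hx0 (Int.Prime.dvd_pow' hp h1)
  obtain ⟨h, hh⟩ := exists_inv p hp ((n' : ℤ) * x i0 ^ (n - 1)) c hux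
  -- new tuple
  set x' : Fin l → ℤ := Function.update x i0 (x i0 + h * (p : ℤ) ^ d) with hx'
  refine ⟨x', ?_, ?_⟩
  · -- sum congruence
    have hsplit : ∀ (f : Fin l → ℤ), ∑ t, f t = f i0 + ∑ t ∈ Finset.univ.erase i0, f t := by
      intro f
      rw [Finset.add_sum_erase _ _ (Finset.mem_univ i0)]
    have hrest : ∀ t ∈ Finset.univ.erase i0, x' t ^ n = x t ^ n := by
      intro t ht
      have : t ≠ i0 := (Finset.mem_erase.mp ht).1
      rw [hx', Function.update_of_ne this]
    have hs1 : ∑ t, x' t ^ n =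
        (x i0 + h * (p : ℤ) ^ d) ^ n + ∑ t ∈ Finset.univ.erase i0, x t ^ n := by
      rw [hsplit (fun t => x' t ^ n), Finset.sum_congr rfl hrest, hx']
      simp
    have hs2 : ∑ t, x t ^ n = x i0 ^ n + ∑ t ∈ Finset.univ.erase i0, x t ^ n :=
      hsplit (fun t => x t ^ n)
    -- main computation, as divisibility
    rw [Int.modEq_iff_dvd] at hh ⊢
    obtain ⟨e1, he1⟩ := expandLem p n a d hp hp3 hn ⟨n', hn'⟩ hd (x i0) h
    obtain ⟨e2, he2⟩ := hh
    refine ⟨e2 - e1, ?_⟩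
    have hj1 : (p : ℤ) ^ (j + 1) = (p : ℤ) ^ (a + d + 1) := by rw [hja]
    have hcast : (n : ℤ) = (p : ℤ) ^ a * (n' : ℤ) := by
      rw [hn']; push_cast; ring
    have hpow : (p : ℤ) ^ a * (p : ℤ) ^ d = (p : ℤ) ^ j := by
      rw [← pow_add, hja]
    have hpp : (p:ℤ)^j * (p:ℤ) = (p:ℤ)^(j+1) := (pow_succ _ _).symm
    calc k - ∑ t, x' t ^ n
        = (k - ∑ t, x t ^ n) + (x i0 ^ n - (x i0 + h * (p:ℤ)^d) ^ n) := by
          rw [hs1, hs2]; ring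
      _ = (p:ℤ)^j * c - ((n:ℤ) * x i0 ^ (n-1) * (h * (p:ℤ)^d) + (p:ℤ)^(a+d+1) * e1) := by
          rw [hc, ← he1]; ring
      _ = (p:ℤ)^j * (c - (n':ℤ) * x i0 ^ (n-1) * h) - (p:ℤ)^(a+d+1) * e1 := by
          rw [hcast]
          rw [← hpow]
          ring
      _ = (p:ℤ)^j * ((p:ℤ) * e2) - (p:ℤ)^(a+d+1) * e1 := by
          have : c - (n':ℤ) * x i0 ^ (n-1) * h = (p:ℤ) * e2 := by
            linarith [he2]
          rw [this]
      _ = (p:ℤ)^(j+1) * (e2 - e1) := by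
          linear_combination e2 * hpp + e1 * hj1
  · -- unit coordinate preserved
    rw [hx', Function.update_self]
    intro hdvd
    apply hx0
    have hpd : (p : ℤ) ∣ h * (p : ℤ) ^ d := by
      exact Dvd.dvd.mul_left (dvd_pow_self _ (by omega)) h
    have := dvd_sub hdvd hpd
    simpa using this

/-- Odd prime `p`, odd `n ≥ 1`, `p^a || n`, `l ≥ 2`: a solution of the congruence
mod `p^j` for some `j ≥ a+1` yields solutions mod `p^i` for all `i ≥ 1`. -/
theorem stmt_1 (p n a l : ℕ) (k : ℤ) (hp : p.Prime) (hp2 : p ≠ 2)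
    (hn : 1 ≤ n) (hnodd : Odd n)
    (hpa : p ^ a ∣ n ∧ ¬ p ^ (a + 1) ∣ n) (hl : 2 ≤ l)
    (hsol : ∃ j, a + 1 ≤ j ∧ ∃ x : Fin l → ℤ,
      (∑ t, x t ^ n) ≡ k [ZMOD (p : ℤ) ^ j]) :
    ∀ i, 1 ≤ i → ∃ y : Fin l → ℤ, (∑ t, y t ^ n) ≡ k [ZMOD (p : ℤ) ^ i] := by
  have hp3 : 3 ≤ p := by
    have := hp.two_le
    rcases Nat.lt_or_ge p 3 with h | h
    · interval_cases p <;> omega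
    · exact h
  -- base : solution mod p^(a+1) with a unit coordinate
  have base : ∃ (i0 : Fin l) (x : Fin l → ℤ),
      (∑ t, x t ^ n) ≡ k [ZMOD (p : ℤ) ^ (a + 1)] ∧ ¬ (p : ℤ) ∣ x i0 := by
    obtain ⟨j, hj, x, hx⟩ := hsol
    have hx1 : (∑ t, x t ^ n) ≡ k [ZMOD (p : ℤ) ^ (a + 1)] :=
      hx.of_dvd (pow_dvd_pow _ hj)
    by_cases hall : ∀ t, (p : ℤ) ∣ x t
    · -- all coordinates divisible : k ≡ 0, take (1, -1, 0, ..., 0)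
      have hna : a + 1 ≤ n := by
        have h1 : p ^ a ≤ n := Nat.le_of_dvd (by omega) hpa.1
        have h2 : a < p ^ a := by
          calc a < 3 ^ a := Nat.lt_pow_self (by norm_num)
            _ ≤ p ^ a := Nat.pow_le_pow_left hp3 a
        omega
      have hdvdsum : (p : ℤ) ^ (a + 1) ∣ ∑ t, x t ^ n := by
        apply Finset.dvd_sum
        intro t _
        calc (p : ℤ) ^ (a + 1) ∣ x t ^ (a + 1) := pow_dvd_pow_of_dvd (hall t) _
          _ ∣ x t ^ n := pow_dvd_pow _ hna
      have hk : (p : ℤ) ^ (a + 1) ∣ k := by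
        obtain ⟨u, hu⟩ := Int.modEq_iff_dvd.mp hx1
        obtain ⟨w, hw⟩ := hdvdsum
        exact ⟨w + u, by linarith⟩
      set i0 : Fin l := ⟨0, by omega⟩ with hi0
      set i1 : Fin l := ⟨1, by omega⟩ with hi1
      have hne : i0 ≠ i1 := by
        simp [hi0, hi1, Fin.ext_iff]
      set y : Fin l → ℤ := fun t => if t = i0 then 1 else if t = i1 then -1 else 0 with hy
      have hsum0 : ∑ t, y t ^ n = 0 := by
        have hpt : ∀ t, y t ^ n =
            (if t = i0 then (1 : ℤ) else 0) + (if t = i1 then (-1 : ℤ) else 0) := by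
          intro t
          by_cases h0 : t = i0
          · subst h0
            simp [hy, hne, if_neg]
          · by_cases h1 : t = i1
            · subst h1
              simp [hy, h0, hnodd.neg_one_pow]
            · simp [hy, h0, h1, zero_pow (by omega : n ≠ 0)]
        rw [Finset.sum_congr rfl (fun t _ => hpt t)]
        rw [Finset.sum_add_distrib]
        simp
      refine ⟨i0, y, ?_, ?_⟩
      · rw [hsum0]
        rw [Int.modEq_iff_dvd]
        simpa using hk
      · simp only [hy, if_pos rfl]
        intro hdvd
        have := Int.le_of_dvd one_pos hdvd
        omega
    · push_neg at hall
      obtain ⟨t0, ht0⟩ := hall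
      exact ⟨t0, x, hx1, ht0⟩
  -- iterate the lifting
  have iter : ∀ m : ℕ, ∃ (i0 : Fin l) (x : Fin l → ℤ),
      (∑ t, x t ^ n) ≡ k [ZMOD (p : ℤ) ^ (a + 1 + m)] ∧ ¬ (p : ℤ) ∣ x i0 := by
    intro m
    induction m with
    | zero => simpa using base
    | succ w ih =>
      obtain ⟨i0, x, hx, hu⟩ := ih
      obtain ⟨x', hx', hu'⟩ := stepLem p n a l k hp hp3 hn hpa.1 hpa.2
        (a + 1 + w) (by omega) x i0 hu hx
      have e : a + 1 + w + 1 = a + 1 + (w + 1) := by omega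
      rw [e] at hx'
      exact ⟨i0, x', hx', hu'⟩
  intro i hi
  obtain ⟨i0, x, hx, -⟩ := iter i
  exact ⟨x, hx.of_dvd (pow_dvd_pow _ (by omega))⟩
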